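/- Let A be a Banach algebra with a right unit element, and suppose A = B ⊕ I where B is a closed unital subalgebra and I is a closed two-sided ideal contained in the right annihilators of A (i.e., A·I = {0}). Then for every closed two-sided ideal J in B, the set J ⊕ I is a closed two-sided ideal in A. -/

import Mathlib

open NormedSpace

noncomputable section

variable {A : Type*} [NonUnitalNormedRing A] [NormedSpace ℂ A]
  [IsScalarTower ℂ A A] [SMulCommClass ℂ A A]

/-- A closed two-sided ideal of a Banach algebra, given as a closed submodule
stable under left and right multiplication. -/
structure IsClosedTwoSidedIdeal (I : Submodule ℂ A) : Prop where
  isClosed : IsClosed (I : Set A)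
  mul_left : ∀ (a : A) ⦃x : A⦄, x ∈ I → a * x ∈ I
  mul_right : ∀ (a : A) ⦃x : A⦄, x ∈ I → x * a ∈ I

/-- `D : A → I*` is a derivation for the canonical dual bimodule structure:
`⟨a·f, i⟩ = ⟨f, i a⟩` and `⟨f·a, i⟩ = ⟨f, a i⟩`, so that
`D(ab) = a·D(b) + D(a)·b` reads pointwise as below. -/
def IsIdealDerivation (I : Submodule ℂ A) (hI : IsClosedTwoSidedIdeal I)
    (D : A →L[ℂ] StrongDual ℂ I) : Prop :=
  ∀ a b : A, ∀ i : I, D (a * b) i =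
    D b ⟨(i : A) * a, hI.mul_right a i.2⟩ + D a ⟨b * (i : A), hI.mul_left b i.2⟩

/-- `D : A → I*` is inner: `D = δ_ξ`, i.e. `D a = a·ξ - ξ·a`. -/
def IsInnerIdealDerivation (I : Submodule ℂ A) (hI : IsClosedTwoSidedIdeal I)
    (D : A →L[ℂ] StrongDual ℂ I) : Prop :=
  ∃ ξ : StrongDual ℂ I, ∀ (a : A) (i : I),
    D a i = ξ ⟨(i : A) * a, hI.mul_right a i.2⟩ - ξ ⟨a * (i : A), hI.mul_left a i.2⟩

/-- `A` is ideally amenable: for every closed two-sided ideal `I`,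
every continuous derivation `A → I*` is inner. -/
def IdeallyAmenable (A : Type*) [NonUnitalNormedRing A] [NormedSpace ℂ A]
    [IsScalarTower ℂ A A] [SMulCommClass ℂ A A] : Prop :=
  ∀ (I : Submodule ℂ A) (hI : IsClosedTwoSidedIdeal I) (D : A →L[ℂ] StrongDual ℂ I),
    IsIdealDerivation I hI D → IsInnerIdealDerivation I hI D

/-- Let `A` be a Banach algebra with a right unit, `A = B ⊕ I`
with `B` a closed unital subalgebra and `I` a closed two-sided ideal contained in
the right annihilators of `A` (`A·I = {0}`).  Then for every closed two-sided ideal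
`J` of `B`, the subspace `J ⊕ I` is a closed two-sided ideal of `A`. -/
theorem sup_closed_ideal [CompleteSpace A]
    (B I : Submodule ℂ A)
    (hBclosed : IsClosed (B : Set A))
    (hBmul : ∀ x ∈ B, ∀ y ∈ B, x * y ∈ B)
    (hBunit : ∃ u ∈ B, ∀ b ∈ B, u * b = b ∧ b * u = b)
    (hI : IsClosedTwoSidedIdeal I)
    (hann : ∀ a : A, ∀ i ∈ I, a * i = 0)
    (hsum : ∀ a : A, ∃ b ∈ B, ∃ i ∈ I, a = b + i)
    (hdisj : ∀ x : A, x ∈ B → x ∈ I → x = 0)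
    (hrunit : ∃ e : A, ∀ x : A, x * e = x)
    (J : Submodule ℂ A) (hJB : J ≤ B) (hJclosed : IsClosed (J : Set A))
    (hJideal : ∀ b ∈ B, ∀ j ∈ J, b * j ∈ J ∧ j * b ∈ J) :
    IsClosed ((J ⊔ I : Submodule ℂ A) : Set A) ∧
    ∀ a : A, ∀ x ∈ (J ⊔ I : Submodule ℂ A),
      a * x ∈ (J ⊔ I : Submodule ℂ A) ∧ x * a ∈ (J ⊔ I : Submodule ℂ A) := by
  -- `B` and `I` are complementary closed subspaces.
  have hcompl : IsCompl B I := by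
    constructor
    · rw [disjoint_iff_inf_le]
      intro x hx
      simpa using hdisj x hx.1 hx.2
    · rw [codisjoint_iff_le_sup]
      intro x _
      obtain ⟨b, hb, i, hi, rfl⟩ := hsum x
      exact Submodule.add_mem _ (Submodule.mem_sup_left hb) (Submodule.mem_sup_right hi)
  -- continuous projection onto `B` along `I`
  set P : A →L[ℂ] B := B.linearProjOfClosedCompl I hcompl hBclosed hI.isClosed with hP
  have hPapply : ∀ x : A, ∀ b ∈ B, ∀ i ∈ I, x = b + i → (P x : A) = b := by
    intro x b hb i hi hx
    have : P x = P b + P i := by rw [hx, map_add]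
    have hPb : P b = ⟨b, hb⟩ := by
      have := Submodule.linearProjOfIsCompl_apply_left hcompl ⟨b, hb⟩
      simpa [hP, Submodule.coe_continuous_linearProjOfClosedCompl'] using this
    have hPi : P i = 0 := by
      have := Submodule.linearProjOfIsCompl_apply_right' hcompl hi
      simpa [hP, Submodule.coe_continuous_linearProjOfClosedCompl'] using this
    rw [this, hPb, hPi, add_zero]
  -- key: membership description of `J ⊔ I`
  have hmem : ∀ x : A, x ∈ (J ⊔ I : Submodule ℂ A) ↔ (P x : A) ∈ J := by
    intro x
    constructor
    · intro hx
      obtain ⟨j, hj, i, hi, rfl⟩ := Submodule.mem_sup.1 hx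
      rw [hPapply (j + i) j (hJB hj) i hi rfl]
      exact hj
    · intro hx
      obtain ⟨b, hb, i, hi, hxbi⟩ := hsum x
      have hPx : (P x : A) = b := hPapply x b hb i hi hxbi
      rw [hxbi]
      exact Submodule.add_mem _ (Submodule.mem_sup_left (hPx ▸ hx))
        (Submodule.mem_sup_right hi)
  constructor
  · have : ((J ⊔ I : Submodule ℂ A) : Set A) =
        (fun x : A => (P x : A)) ⁻¹' (J : Set A) := by
      ext x; exact hmem x
    rw [this]
    exact hJclosed.preimage (continuous_subtype_val.comp P.continuous)
  · intro a x hx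
    obtain ⟨j, hj, i, hi, rfl⟩ := Submodule.mem_sup.1 hx
    obtain ⟨b, hb, i', hi', rfl⟩ := hsum a
    constructor
    · have : (b + i') * (j + i) = b * j + i' * j := by
        rw [add_mul, mul_add, mul_add, hann b i hi, hann i' i hi, add_zero, add_zero]
      rw [this]
      exact Submodule.add_mem _ (Submodule.mem_sup_left ((hJideal b hb j hj).1)
        ) (Submodule.mem_sup_right (hI.mul_right j hi'))
    · have : (j + i) * (b + i') = j * b + i * b := by
        rw [add_mul, mul_add, mul_add, hann j i' hi', hann i i' hi', add_zero, add_zero]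
      rw [this]
      exact Submodule.add_mem _ (Submodule.mem_sup_left ((hJideal b hb j hj).2))
        (Submodule.mem_sup_right (hI.mul_right b hi))
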